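/- Let n ≥ 1 be an integer, let a₀, a₁, …, aₙ, a_{n+1} be real numbers with a₀ > 0 and a₀² − a_{n+1}² > Σ_{i=1}^n aᵢ², and write a = (a₁, …, aₙ) ∈ ℝⁿ. Define u(x) = a₀·(1+|x|²)/2 + ⟨a, x⟩ + a_{n+1}·(1−|x|²)/2 for x ∈ ℝⁿ. Then: (1) u(x) > 0 for all x ∈ ℝⁿ; (2) Δu is identically equal to the positive constant n(a₀ − a_{n+1}); and (3) |∇u|² − (2/n)uΔu is identically equal to the negative constant |a|² + a_{n+1}² − a₀². -/

import Mathlib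

open MeasureTheory
open scoped RealInnerProductSpace

noncomputable section

/-- The Euclidean Laplacian `Δf = Σᵢ ∂²f/∂xᵢ²`. -/
def lapl {n : ℕ} (f : EuclideanSpace ℝ (Fin n) → ℝ) (x : EuclideanSpace ℝ (Fin n)) : ℝ :=
  ∑ i, iteratedFDeriv ℝ 2 f x ![EuclideanSpace.single i 1, EuclideanSpace.single i 1]

section Aux

variable {n : ℕ}

private lemma quad_hasFDerivAt (c d : ℝ) (a x : EuclideanSpace ℝ (Fin n)) :
    HasFDerivAt (fun y : EuclideanSpace ℝ (Fin n) => c / 2 * ⟪y, y⟫ + ⟪a, y⟫ + d)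
      (innerSL ℝ (c • x + a)) x := by
  have h1 := ((hasFDerivAt_id x).inner ℝ (hasFDerivAt_id x)).const_mul (c / 2)
  have h2 : HasFDerivAt (fun y : EuclideanSpace ℝ (Fin n) => ⟪a, y⟫) (innerSL ℝ a) x :=
    (innerSL ℝ a).hasFDerivAt
  have h := (h1.add h2).add_const d
  refine h.congr_fderiv ?_
  ext v
  simp only [ContinuousLinearMap.add_apply, ContinuousLinearMap.smul_apply,
    ContinuousLinearMap.comp_apply, ContinuousLinearMap.prod_apply,
    ContinuousLinearMap.coe_id', fderivInnerCLM_apply, innerSL_apply_apply, id_eq,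
    smul_eq_mul, inner_add_left, real_inner_smul_left]
  rw [real_inner_comm v x]
  ring

end Aux

set_option maxHeartbeats 1600000 in
/-- for the quadratic `u(x) = a₀(1+|x|²)/2 + ⟨a,x⟩ + a_{n+1}(1-|x|²)/2`
with `a₀ > 0` and `a₀² - a_{n+1}² > Σ aᵢ²`, `u` is positive, `Δu` is the positive
constant `n(a₀ - a_{n+1})`, and `|∇u|² - (2/n)uΔu` is the negative constant
`|a|² + a_{n+1}² - a₀²`. -/
theorem quadratic_tractor_norms (n : ℕ) (hn : 1 ≤ n)
    (a₀ aN : ℝ) (a : EuclideanSpace ℝ (Fin n))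
    (ha₀ : 0 < a₀) (hlen : a₀ ^ 2 - aN ^ 2 > ∑ i, a i ^ 2)
    (u : EuclideanSpace ℝ (Fin n) → ℝ)
    (hu : ∀ x, u x = a₀ * (1 + ‖x‖ ^ 2) / 2 + ⟪a, x⟫ + aN * (1 - ‖x‖ ^ 2) / 2) :
    (∀ x, 0 < u x) ∧
      (0 < (n : ℝ) * (a₀ - aN) ∧ ∀ x, lapl u x = n * (a₀ - aN)) ∧
      ((∑ i, a i ^ 2) + aN ^ 2 - a₀ ^ 2 < 0 ∧
        ∀ x, ‖gradient u x‖ ^ 2 - (2 / n) * u x * lapl u x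
          = (∑ i, a i ^ 2) + aN ^ 2 - a₀ ^ 2) := by
  set c : ℝ := a₀ - aN with hc
  set d : ℝ := (a₀ + aN) / 2 with hd
  -- norm of a
  have hna : ‖a‖ ^ 2 = ∑ i, a i ^ 2 := by
    rw [EuclideanSpace.norm_eq, Real.sq_sqrt (by positivity)]
    exact Finset.sum_congr rfl fun i _ => by rw [Real.norm_eq_abs, sq_abs]
  have hsumnn : (0:ℝ) ≤ ∑ i, a i ^ 2 := Finset.sum_nonneg fun i _ => sq_nonneg _
  have haN : |aN| < a₀ := by
    have : aN ^ 2 < a₀ ^ 2 := by nlinarith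
    nlinarith [abs_nonneg aN, sq_abs aN]
  have hcpos : 0 < c := by
    have := abs_lt.mp haN; simp only [hc]; linarith [this.2]
  have hdpos : 0 < d := by
    have := abs_lt.mp haN; simp only [hd]; linarith [this.1]
  -- rewrite u
  clear_value c d
  have hueq : u = fun y : EuclideanSpace ℝ (Fin n) => c / 2 * ⟪y, y⟫ + ⟪a, y⟫ + d := by
    funext y
    rw [hu y, ← @real_inner_self_eq_norm_sq]
    simp only [hc, hd]; ring
  subst hueq
  -- first derivative
  have hfd : ∀ x : EuclideanSpace ℝ (Fin n), HasFDerivAt (fun y : EuclideanSpace ℝ (Fin n) => c / 2 * ⟪y, y⟫ + ⟪a, y⟫ + d)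
      (innerSL ℝ (c • x + a)) x := fun x => quad_hasFDerivAt c d a x
  have hfderiv : (fderiv ℝ (fun y : EuclideanSpace ℝ (Fin n) => c / 2 * ⟪y, y⟫ + ⟪a, y⟫ + d)) =
      fun x : EuclideanSpace ℝ (Fin n) => innerSL ℝ (c • x + a) := funext fun x => (hfd x).fderiv
  -- gradient
  have hgrad : ∀ x : EuclideanSpace ℝ (Fin n), gradient (fun y : EuclideanSpace ℝ (Fin n) => c / 2 * ⟪y, y⟫ + ⟪a, y⟫ + d) x = c • x + a := by
    intro x
    refine HasGradientAt.gradient ?_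
    rw [hasGradientAt_iff_hasFDerivAt]
    exact (hfd x).congr_fderiv (by ext v; simp)
  -- second derivative
  have hfd2 : ∀ x : EuclideanSpace ℝ (Fin n), HasFDerivAt (fderiv ℝ (fun y : EuclideanSpace ℝ (Fin n) => c / 2 * ⟪y, y⟫ + ⟪a, y⟫ + d))
      (c • (innerSL ℝ : EuclideanSpace ℝ (Fin n) →L[ℝ] EuclideanSpace ℝ (Fin n) →L[ℝ] ℝ)) x := by
    intro x
    rw [hfderiv]
    have : (fun x : EuclideanSpace ℝ (Fin n) => innerSL ℝ (c • x + a)) =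
        fun x : EuclideanSpace ℝ (Fin n) => (c • (innerSL ℝ : EuclideanSpace ℝ (Fin n) →L[ℝ] EuclideanSpace ℝ (Fin n) →L[ℝ] ℝ)) x + innerSL ℝ a := by
      funext y; ext v
      simp [inner_add_left, real_inner_smul_left]
    rw [this]
    exact (c • (innerSL ℝ : EuclideanSpace ℝ (Fin n) →L[ℝ] EuclideanSpace ℝ (Fin n) →L[ℝ] ℝ)).hasFDerivAt.add_const _
  -- Laplacian
  have hlapl : ∀ x : EuclideanSpace ℝ (Fin n), lapl (fun y : EuclideanSpace ℝ (Fin n) => c / 2 * ⟪y, y⟫ + ⟪a, y⟫ + d) x = n * c := by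
    intro x
    unfold lapl
    have : ∀ i : Fin n, iteratedFDeriv ℝ 2 (fun y : EuclideanSpace ℝ (Fin n) => c / 2 * ⟪y, y⟫ + ⟪a, y⟫ + d) x
        ![EuclideanSpace.single i 1, EuclideanSpace.single i 1] = c := by
      intro i
      rw [iteratedFDeriv_two_apply, (hfd2 x).fderiv]
      have h1 : ⟪(EuclideanSpace.single i 1 : EuclideanSpace ℝ (Fin n)),
          EuclideanSpace.single i 1⟫ = 1 := by
        simp [EuclideanSpace.inner_single_left, EuclideanSpace.single_apply]
      simp only [ContinuousLinearMap.smul_apply, innerSL_apply_apply, Matrix.cons_val_zero,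
        Matrix.cons_val_one, Matrix.head_cons, smul_eq_mul, h1, mul_one]
      exact (congrArg (c * ·) (h1 : (innerSL ℝ (EuclideanSpace.single i 1 : EuclideanSpace ℝ (Fin n))) (EuclideanSpace.single i 1) = 1)).trans (mul_one c)
    rw [Finset.sum_congr rfl fun i _ => this i]
    simp [mul_comm]
  have hnne : (n:ℝ) ≠ 0 := by positivity
  refine ⟨?_, ⟨by positivity, hlapl⟩, ⟨by linarith, ?_⟩⟩
  · -- positivity of u
    intro x
    have hcs : |⟪a, x⟫| ≤ ‖a‖ * ‖x‖ := abs_real_inner_le_norm a x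
    have h1 : -(‖a‖ * ‖x‖) ≤ ⟪a, x⟫ := (abs_le.mp hcs).1
    have hxx : ⟪x, x⟫ = ‖x‖ ^ 2 := real_inner_self_eq_norm_sq x
    have h2 : ‖a‖ ^ 2 < 2 * c * d := by rw [hna]; simp only [hc, hd]; nlinarith
    have key : 0 < c / 2 * ‖x‖ ^ 2 - ‖a‖ * ‖x‖ + d := by
      nlinarith [sq_nonneg (c * ‖x‖ - ‖a‖), norm_nonneg x, norm_nonneg a,
        mul_pos hcpos hdpos]
    simp only [hxx]
    linarith
  · -- tractor identity
    intro x
    rw [hgrad x, hlapl x]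
    have hexp : ‖c • x + a‖ ^ 2 = c ^ 2 * ‖x‖ ^ 2 + 2 * (c * ⟪x, a⟫) + ‖a‖ ^ 2 := by
      rw [@norm_add_sq_real, norm_smul, real_inner_smul_left]
      rw [mul_pow, Real.norm_eq_abs, sq_abs]
    rw [hexp, hna]
    have hxa : ⟪a, x⟫ = ⟪x, a⟫ := real_inner_comm x a
    have hxx : ⟪x, x⟫ = ‖x‖ ^ 2 := real_inner_self_eq_norm_sq x
    simp only [hxa, hxx]
    have h2n : 2 / (n:ℝ) * n = 2 := by field_simp
    have hU : 2 / (n:ℝ) * (c / 2 * ‖x‖ ^ 2 + ⟪x, a⟫ + d) * (n * c)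
        = 2 * c * (c / 2 * ‖x‖ ^ 2 + ⟪x, a⟫ + d) := by
      linear_combination (c / 2 * ‖x‖ ^ 2 + ⟪x, a⟫ + d) * c * h2n
    rw [hU, hc, hd]
    ring
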